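/- Let f be a probability density on ℝ satisfying Assumption F, and let ε have density f. Let h : ℝ → ℝ be absolutely continuous with almost-everywhere derivative h′ such that E|h′(ε)| < ∞, E|ℓ(ε)h(ε)| < ∞, and h(z)f(z) → 0 as z → ±∞. Then E[h′(ε)] = E[ℓ(ε)h(ε)]. -/

import Mathlib

open MeasureTheory ProbabilityTheory Filter Set
open scoped NNReal ENNReal

lemma continuous_of_FTC (g g' : ℝ → ℝ)
    (hAC : ∀ a b : ℝ, g b - g a = ∫ z in a..b, g' z) : Continuous g := by
  rw [continuous_iff_continuousAt]
  intro β
  rw [continuousAt_iff_continuous_left_right]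
  constructor
  · by_cases hI : ∃ c < β, IntervalIntegrable g' volume c β
    · obtain ⟨c, hc, hci⟩ := hI
      have hcont : ContinuousOn (fun x => ∫ z in c..x, g' z) (Set.uIcc c β) :=
        intervalIntegral.continuousOn_primitive_interval' hci Set.left_mem_uIcc
      have hg : ∀ x ∈ Set.uIcc c β, g x = g c + ∫ z in c..x, g' z := by
        intro x _
        have := hAC c x
        linarith
      have hβ : β ∈ Set.uIcc c β := Set.right_mem_uIcc
      have : ContinuousWithinAt g (Set.uIcc c β) β := by
        refine (((continuousOn_const.add hcont) β hβ).congr hg (hg β hβ))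
      refine this.mono_of_mem_nhdsWithin ?_
      rw [Set.uIcc_of_le hc.le]
      exact Icc_mem_nhdsLE hc
    · push_neg at hI
      have hconst : ∀ x ∈ Set.Iic β, g x = g β := by
        intro x hx
        have hxβ : x ≤ β := hx
        rcases eq_or_lt_of_le hxβ with rfl | hlt
        · rfl
        · have h0 := hAC x β
          rw [intervalIntegral.integral_undef (hI x hlt)] at h0
          linarith
      have : Tendsto g (nhdsWithin β (Set.Iic β)) (nhds (g β)) := by
        refine Tendsto.congr' ?_ tendsto_const_nhds
        filter_upwards [self_mem_nhdsWithin] with x hx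
        exact (hconst x hx).symm
      exact this
  · by_cases hI : ∃ c, β < c ∧ IntervalIntegrable g' volume β c
    · obtain ⟨c, hc, hci⟩ := hI
      have hcont : ContinuousOn (fun x => ∫ z in β..x, g' z) (Set.uIcc β c) :=
        intervalIntegral.continuousOn_primitive_interval' hci Set.left_mem_uIcc
      have hg : ∀ x ∈ Set.uIcc β c, g x = g β + ∫ z in β..x, g' z := by
        intro x _
        have := hAC β x
        linarith
      have hβ : β ∈ Set.uIcc β c := Set.left_mem_uIcc
      have : ContinuousWithinAt g (Set.uIcc β c) β :=
        ((continuousOn_const.add hcont) β hβ).congr hg (hg β hβ)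
      refine this.mono_of_mem_nhdsWithin ?_
      rw [Set.uIcc_of_le hc.le]
      exact Icc_mem_nhdsGE hc
    · push_neg at hI
      have hconst : ∀ x ∈ Set.Ici β, g x = g β := by
        intro x hx
        have hxβ : β ≤ x := hx
        rcases eq_or_lt_of_le hxβ with rfl | hlt
        · rfl
        · have h0 := hAC β x
          rw [intervalIntegral.integral_undef (hI x hlt)] at h0
          linarith
      have : Tendsto g (nhdsWithin β (Set.Ici β)) (nhds (g β)) := by
        refine Tendsto.congr' ?_ tendsto_const_nhds
        filter_upwards [self_mem_nhdsWithin] with x hx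
        exact (hconst x hx).symm
      exact this

lemma transfer_integral {Ω : Type*} [MeasurableSpace Ω] (μ : Measure Ω) (ε : Ω → ℝ)
    (hε : Measurable ε) (f : ℝ → ℝ) (hfm : Measurable f) (hfpos : ∀ z, 0 ≤ f z)
    (hdens : μ.map ε = (volume : Measure ℝ).withDensity fun z => ENNReal.ofReal (f z))
    (G : ℝ → ℝ) (hG : Measurable G) :
    (∫ ω, G (ε ω) ∂μ = ∫ z, G z * f z) ∧
      (Integrable (fun ω => G (ε ω)) μ ↔ Integrable (fun z => G z * f z)) := by
  have h1 : ∫ ω, G (ε ω) ∂μ = ∫ y, G y ∂(μ.map ε) :=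
    (integral_map hε.aemeasurable hG.aestronglyMeasurable).symm
  have hd : (fun z => ENNReal.ofReal (f z)) = fun z => ((Real.toNNReal (f z) : ℝ≥0) : ℝ≥0∞) := rfl
  have htm : Measurable fun z => Real.toNNReal (f z) := hfm.real_toNNReal
  have h2 : ∫ y, G y ∂((volume : Measure ℝ).withDensity fun z => ENNReal.ofReal (f z))
      = ∫ z, G z * f z := by
    rw [hd, integral_withDensity_eq_integral_smul htm]
    congr 1
    ext z
    rw [NNReal.smul_def, smul_eq_mul, Real.coe_toNNReal _ (hfpos z)]
    ring
  constructor
  · rw [h1, hdens, h2]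
  · have hcomp : (fun ω => G (ε ω)) = G ∘ ε := rfl
    rw [hcomp, ← integrable_map_measure hG.aestronglyMeasurable hε.aemeasurable, hdens,
      integrable_withDensity_iff (hfm.ennreal_ofReal) (ae_of_all _ fun z => ENNReal.ofReal_lt_top)]
    constructor
    · intro hh
      refine hh.congr (ae_of_all _ fun z => ?_)
      simp [ENNReal.toReal_ofReal (hfpos z)]
    · intro hh
      refine hh.congr (ae_of_all _ fun z => ?_)
      simp [ENNReal.toReal_ofReal (hfpos z)]

lemma prod_rule_integral (f f' h h' : ℝ → ℝ) (hf'm : Measurable f') (hh'm : Measurable h')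
    (hfc : Continuous f) (hhc : Continuous h)
    (hfAC : ∀ a b : ℝ, f b - f a = ∫ z in a..b, f' z)
    (hhAC : ∀ a b : ℝ, h b - h a = ∫ z in a..b, h' z)
    {a b : ℝ} (hab : a ≤ b)
    (hfi : IntegrableOn f' (Ioc a b)) (hhi : IntegrableOn h' (Ioc a b)) :
    ∫ z in Ioc a b, (h' z * f z + h z * f' z) = h b * f b - h a * f a := by
  set I : Set ℝ := Ioc a b with hI
  set ν : Measure ℝ := volume.restrict I with hν
  -- boundedness of f and h on Icc a b
  obtain ⟨Cf, hCf⟩ := (isCompact_Icc (a := a) (b := b)).exists_bound_of_continuousOn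
    hfc.continuousOn
  obtain ⟨Ch, hCh⟩ := (isCompact_Icc (a := a) (b := b)).exists_bound_of_continuousOn
    hhc.continuousOn
  have haeI : ∀ᵐ z ∂ν, z ∈ I := ae_restrict_mem measurableSet_Ioc
  -- integrability of various products
  have hh'f : Integrable (fun z => h' z * f z) ν := by
    have : Integrable (fun z => f z * h' z) ν := by
      refine Integrable.bdd_mul (c := Cf) hhi (hfc.aestronglyMeasurable.restrict) ?_
      filter_upwards [haeI] with z hz
      exact hCf z (Ioc_subset_Icc_self hz)
    exact this.congr (ae_of_all _ fun z => mul_comm _ _)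
  have hhf' : Integrable (fun z => h z * f' z) ν := by
    refine Integrable.bdd_mul (c := Ch) hfi (hhc.aestronglyMeasurable.restrict) ?_
    filter_upwards [haeI] with z hz
    exact hCh z (Ioc_subset_Icc_self hz)
  -- set-integral forms of AC hypotheses
  have hfset : ∀ x y : ℝ, x ≤ y → ∫ z in Ioc x y, f' z = f y - f x := by
    intro x y hxy
    rw [← intervalIntegral.integral_of_le hxy]
    exact (hfAC x y).symm
  have hhset : ∀ x y : ℝ, x ≤ y → ∫ z in Ioc x y, h' z = h y - h x := by
    intro x y hxy
    rw [← intervalIntegral.integral_of_le hxy]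
    exact (hhAC x y).symm
  -- the double integral
  set Φ : ℝ → ℝ → ℝ := fun t s => h' t * (Ioc a t).indicator f' s with hΦ
  have hmeasT : MeasurableSet {p : ℝ × ℝ | a < p.2 ∧ p.2 ≤ p.1} :=
    (measurableSet_lt measurable_const measurable_snd).inter
      (measurableSet_le measurable_snd measurable_fst)
  have hΦeq : Function.uncurry Φ =
      {p : ℝ × ℝ | a < p.2 ∧ p.2 ≤ p.1}.indicator (fun p => h' p.1 * f' p.2) := by
    ext p
    rcases p with ⟨t, s⟩
    simp only [Function.uncurry, hΦ, Set.indicator, Set.mem_Ioc, Set.mem_setOf_eq]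
    by_cases hc : a < s ∧ s ≤ t
    · simp [hc]
    · simp [hc]
  have hΦint : Integrable (Function.uncurry Φ) (ν.prod ν) := by
    refine Integrable.mono' ((hhi.norm.mul_prod hfi.norm : _)) ?_ ?_
    · rw [hΦeq]
      exact ((hh'm.comp measurable_fst).mul (hf'm.comp measurable_snd)).indicator
        hmeasT |>.aestronglyMeasurable
    · refine ae_of_all _ fun p => ?_
      rw [hΦeq]
      calc ‖Set.indicator _ (fun p => h' p.1 * f' p.2) p‖
          ≤ ‖h' p.1 * f' p.2‖ := norm_indicator_le_norm_self _ _
        _ = ‖h' p.1‖ * ‖f' p.2‖ := norm_mul _ _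
  have hswap : ∫ t, (∫ s, Φ t s ∂ν) ∂ν = ∫ s, (∫ t, Φ t s ∂ν) ∂ν :=
    integral_integral_swap hΦint
  -- evaluate LHS of swap
  have hL : ∫ t, (∫ s, Φ t s ∂ν) ∂ν = ∫ t in I, h' t * (f t - f a) := by
    refine setIntegral_congr_fun measurableSet_Ioc fun t ht => ?_
    have : ∫ s, Φ t s ∂ν = h' t * ∫ s, (Ioc a t).indicator f' s ∂ν := integral_const_mul _ _
    rw [this]
    congr 1
    rw [hν, integral_indicator measurableSet_Ioc, Measure.restrict_restrict measurableSet_Ioc,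
      Set.Ioc_inter_Ioc]
    rw [max_self, min_eq_left ht.2]
    exact hfset a t ht.1.le
  -- evaluate RHS of swap
  have hR : ∫ s, (∫ t, Φ t s ∂ν) ∂ν = ∫ s in I, (h b - h s) * f' s := by
    refine setIntegral_congr_fun measurableSet_Ioc fun s hs => ?_
    have hΦs : ∀ t, Φ t s = (Ici s).indicator (fun t => h' t * f' s) t := by
      intro t
      simp only [hΦ, Set.indicator, Set.mem_Ioc, Set.mem_Ici]
      by_cases hts : s ≤ t
      · simp [hts, hs.1]
      · simp [hts]
    calc ∫ t, Φ t s ∂ν = ∫ t, (Ici s).indicator (fun t => h' t * f' s) t ∂ν := by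
          simp_rw [hΦs]
      _ = ∫ t in Ici s ∩ I, h' t * f' s := by
          rw [hν, integral_indicator measurableSet_Ici,
            Measure.restrict_restrict measurableSet_Ici]
      _ = ∫ t in Ioc s b, h' t * f' s := by
          have hseteq : Ici s ∩ I = Icc s b := by
            ext t
            simp only [Set.mem_inter_iff, Set.mem_Ici, Set.mem_Ioc, Set.mem_Icc, hI]
            constructor
            · rintro ⟨h1, _, h3⟩
              exact ⟨h1, h3⟩
            · rintro ⟨h1, h2⟩
              exact ⟨h1, hs.1.trans_le h1, h2⟩
          rw [hseteq, MeasureTheory.integral_Icc_eq_integral_Ioc]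
      _ = (∫ t in Ioc s b, h' t) * f' s := by rw [integral_mul_const]
      _ = (h b - h s) * f' s := by rw [hhset s b hs.2]
  have e1 : ∫ t in I, h' t * (f t - f a) = (∫ t in I, h' t * f t) - (h b - h a) * f a := by
    have hpt : ∀ t, h' t * (f t - f a) = h' t * f t - h' t * f a := fun t => by ring
    simp_rw [hpt]
    rw [integral_sub hh'f (hhi.mul_const _), integral_mul_const, hhset a b hab]
  have e2 : ∫ s in I, (h b - h s) * f' s = h b * (f b - f a) - ∫ s in I, h s * f' s := by
    have hpt : ∀ s, (h b - h s) * f' s = h b * f' s - h s * f' s := fun s => by ring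
    simp_rw [hpt]
    rw [integral_sub (hfi.const_mul _) hhf', integral_const_mul, hfset a b hab]
  have e3 := hswap
  rw [hL, hR, e1, e2] at e3
  rw [integral_add hh'f hhf']
  linarith

lemma piece_left (D : ℝ → ℝ) (hD : Integrable D) (S : ℝ → ℝ)
    {α m : ℝ} (hαm : α < m)
    (hPR : ∀ x, α < x → x ≤ m → ∫ z in Ioc x m, D z = S m - S x)
    (hlim : Tendsto S (nhdsWithin α (Ioi α)) (nhds 0)) :
    ∫ z in Ioc α m, D z = S m := by
  set x : ℕ → ℝ := fun n => α + (m - α) * (1/((n:ℝ)+1)) with hx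
  have hd : 0 < m - α := sub_pos.2 hαm
  have hxpos : ∀ n : ℕ, (0:ℝ) < (n:ℝ)+1 := fun n => by positivity
  have hxgt : ∀ n, α < x n := fun n => by
    have : 0 < (m-α) * (1/((n:ℝ)+1)) := by positivity
    simp only [hx]; linarith
  have hxle : ∀ n, x n ≤ m := fun n => by
    have h1 : (m-α) * (1/((n:ℝ)+1)) ≤ (m-α) * 1 := by
      apply mul_le_mul_of_nonneg_left _ hd.le
      rw [div_le_one (hxpos n)]
      have : (0:ℝ) ≤ (n:ℝ) := Nat.cast_nonneg n
      linarith
    simp only [hx]; linarith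
  have hxanti : Antitone x := by
    intro n k hnk
    simp only [hx, add_le_add_iff_left]
    apply mul_le_mul_of_nonneg_left _ hd.le
    apply one_div_le_one_div_of_le (hxpos n)
    have : (n:ℝ) ≤ (k:ℝ) := Nat.cast_le.2 hnk
    linarith
  have hxt : Tendsto x atTop (nhds α) := by
    have h0 : Tendsto (fun n : ℕ => (m-α) * (1/((n:ℝ)+1))) atTop (nhds 0) := by
      have := tendsto_one_div_add_atTop_nhds_zero_nat.const_mul (m-α)
      simpa using this
    have h1 := tendsto_const_nhds (x := α) (f := atTop (α := ℕ)) |>.add h0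
    rw [hx]
    simpa [one_div] using h1
  have hxtW : Tendsto x atTop (nhdsWithin α (Ioi α)) :=
    tendsto_nhdsWithin_of_tendsto_nhds_of_eventually_within _ hxt
      (Eventually.of_forall fun n => hxgt n)
  have hsm : ∀ n : ℕ, MeasurableSet (Ioc (x n) m) := fun n => measurableSet_Ioc
  have hmono : Monotone fun n => Ioc (x n) m := fun n k hnk =>
    Ioc_subset_Ioc_left (hxanti hnk)
  have hunion : (⋃ n, Ioc (x n) m) = Ioc α m := by
    ext z
    simp only [mem_iUnion, mem_Ioc]
    constructor
    · rintro ⟨n, h1, h2⟩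
      exact ⟨(hxgt n).trans h1, h2⟩
    · rintro ⟨h1, h2⟩
      obtain ⟨n, hn⟩ := (hxt.eventually_lt_const h1).exists
      exact ⟨n, hn, h2⟩
  have htend := tendsto_setIntegral_of_monotone hsm hmono (by rw [hunion]; exact hD.integrableOn)
  rw [hunion] at htend
  have htend2 : Tendsto (fun n => ∫ z in Ioc (x n) m, D z) atTop (nhds (S m - 0)) := by
    refine (tendsto_const_nhds.sub (hlim.comp hxtW)).congr fun n => ?_
    exact (hPR (x n) (hxgt n) (hxle n)).symm
  have := tendsto_nhds_unique htend htend2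
  rw [this, sub_zero]

lemma piece_left_inf (D : ℝ → ℝ) (hD : Integrable D) (S : ℝ → ℝ) (m : ℝ)
    (hPR : ∀ x, x ≤ m → ∫ z in Ioc x m, D z = S m - S x)
    (hlim : Tendsto S atBot (nhds 0)) :
    ∫ z in Iic m, D z = S m := by
  set x : ℕ → ℝ := fun n => m - n with hx
  have hxle : ∀ n, x n ≤ m := fun n => by
    simp only [hx]
    have : (0:ℝ) ≤ (n:ℝ) := Nat.cast_nonneg n
    linarith
  have hxanti : Antitone x := by
    intro n k hnk
    simp only [hx, sub_le_sub_iff_left]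
    exact_mod_cast hnk
  have hxt : Tendsto x atTop atBot := by
    apply tendsto_atBot_add_const_left
    exact tendsto_neg_atBot_iff.mpr tendsto_natCast_atTop_atTop
  have hsm : ∀ n : ℕ, MeasurableSet (Ioc (x n) m) := fun n => measurableSet_Ioc
  have hmono : Monotone fun n => Ioc (x n) m := fun n k hnk =>
    Ioc_subset_Ioc_left (hxanti hnk)
  have hunion : (⋃ n, Ioc (x n) m) = Iic m := by
    ext z
    simp only [mem_iUnion, mem_Ioc, mem_Iic]
    constructor
    · rintro ⟨n, _, h2⟩
      exact h2
    · intro h1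
      obtain ⟨n, hn⟩ := (hxt.eventually (eventually_lt_atBot z)).exists
      exact ⟨n, hn, h1⟩
  have htend := tendsto_setIntegral_of_monotone hsm hmono (by rw [hunion]; exact hD.integrableOn)
  rw [hunion] at htend
  have htend2 : Tendsto (fun n => ∫ z in Ioc (x n) m, D z) atTop (nhds (S m - 0)) := by
    refine (tendsto_const_nhds.sub (hlim.comp hxt)).congr fun n => ?_
    exact (hPR (x n) (hxle n)).symm
  have := tendsto_nhds_unique htend htend2
  rw [this, sub_zero]

lemma piece_right (D : ℝ → ℝ) (hD : Integrable D) (S : ℝ → ℝ)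
    {m β : ℝ} (hmβ : m < β)
    (hPR : ∀ y, m ≤ y → y < β → ∫ z in Ioc m y, D z = S y - S m)
    (hlim : Tendsto S (nhdsWithin β (Iio β)) (nhds 0)) :
    ∫ z in Ioo m β, D z = - S m := by
  set y : ℕ → ℝ := fun n => β - (β - m) * (1/((n:ℝ)+1)) with hy
  have hd : 0 < β - m := sub_pos.2 hmβ
  have hypos : ∀ n : ℕ, (0:ℝ) < (n:ℝ)+1 := fun n => by positivity
  have hylt : ∀ n, y n < β := fun n => by
    have : 0 < (β-m) * (1/((n:ℝ)+1)) := by positivity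
    simp only [hy]; linarith
  have hyge : ∀ n, m ≤ y n := fun n => by
    have h1 : (β-m) * (1/((n:ℝ)+1)) ≤ (β-m) * 1 := by
      apply mul_le_mul_of_nonneg_left _ hd.le
      rw [div_le_one (hypos n)]
      have : (0:ℝ) ≤ (n:ℝ) := Nat.cast_nonneg n
      linarith
    simp only [hy]; linarith
  have hymono : Monotone y := by
    intro n k hnk
    simp only [hy, sub_le_sub_iff_left]
    apply mul_le_mul_of_nonneg_left _ hd.le
    apply one_div_le_one_div_of_le (hypos n)
    have : (n:ℝ) ≤ (k:ℝ) := Nat.cast_le.2 hnk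
    linarith
  have hyt : Tendsto y atTop (nhds β) := by
    have h0 : Tendsto (fun n : ℕ => (β-m) * (1/((n:ℝ)+1))) atTop (nhds 0) := by
      have := tendsto_one_div_add_atTop_nhds_zero_nat.const_mul (β-m)
      simpa using this
    have h1 := tendsto_const_nhds (x := β) (f := atTop (α := ℕ)) |>.sub h0
    rw [hy]
    simpa [one_div] using h1
  have hytW : Tendsto y atTop (nhdsWithin β (Iio β)) :=
    tendsto_nhdsWithin_of_tendsto_nhds_of_eventually_within _ hyt
      (Eventually.of_forall fun n => hylt n)
  have hsm : ∀ n : ℕ, MeasurableSet (Ioc m (y n)) := fun n => measurableSet_Ioc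
  have hmono : Monotone fun n => Ioc m (y n) := fun n k hnk =>
    Ioc_subset_Ioc_right (hymono hnk)
  have hunion : (⋃ n, Ioc m (y n)) = Ioo m β := by
    ext z
    simp only [mem_iUnion, mem_Ioc, mem_Ioo]
    constructor
    · rintro ⟨n, h1, h2⟩
      exact ⟨h1, lt_of_le_of_lt h2 (hylt n)⟩
    · rintro ⟨h1, h2⟩
      obtain ⟨n, hn⟩ := (hyt.eventually_const_lt h2).exists
      exact ⟨n, h1, hn.le⟩
  have htend := tendsto_setIntegral_of_monotone hsm hmono (by rw [hunion]; exact hD.integrableOn)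
  rw [hunion] at htend
  have htend2 : Tendsto (fun n => ∫ z in Ioc m (y n), D z) atTop (nhds (0 - S m)) := by
    refine ((hlim.comp hytW).sub tendsto_const_nhds).congr fun n => ?_
    exact (hPR (y n) (hyge n) (hylt n)).symm
  have := tendsto_nhds_unique htend htend2
  rw [this, zero_sub]

lemma piece_right_inf (D : ℝ → ℝ) (hD : Integrable D) (S : ℝ → ℝ) (m : ℝ)
    (hPR : ∀ y, m ≤ y → ∫ z in Ioc m y, D z = S y - S m)
    (hlim : Tendsto S atTop (nhds 0)) :
    ∫ z in Ioi m, D z = - S m := by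
  set y : ℕ → ℝ := fun n => m + n with hy
  have hyge : ∀ n, m ≤ y n := fun n => by
    simp only [hy]
    have : (0:ℝ) ≤ (n:ℝ) := Nat.cast_nonneg n
    linarith
  have hymono : Monotone y := by
    intro n k hnk
    simp only [hy, add_le_add_iff_left]
    exact_mod_cast hnk
  have hyt : Tendsto y atTop atTop := by
    apply tendsto_atTop_add_const_left
    exact tendsto_natCast_atTop_atTop
  have hsm : ∀ n : ℕ, MeasurableSet (Ioc m (y n)) := fun n => measurableSet_Ioc
  have hmono : Monotone fun n => Ioc m (y n) := fun n k hnk =>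
    Ioc_subset_Ioc_right (hymono hnk)
  have hunion : (⋃ n, Ioc m (y n)) = Ioi m := by
    ext z
    simp only [mem_iUnion, mem_Ioc, mem_Ioi]
    constructor
    · rintro ⟨n, h1, _⟩
      exact h1
    · intro h1
      obtain ⟨n, hn⟩ := (hyt.eventually (eventually_ge_atTop z)).exists
      exact ⟨n, h1, hn⟩
  have htend := tendsto_setIntegral_of_monotone hsm hmono (by rw [hunion]; exact hD.integrableOn)
  rw [hunion] at htend
  have htend2 : Tendsto (fun n => ∫ z in Ioc m (y n), D z) atTop (nhds (0 - S m)) := by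
    refine ((hlim.comp hyt).sub tendsto_const_nhds).congr fun n => ?_
    exact (hPR (y n) (hyge n)).symm
  have := tendsto_nhds_unique htend htend2
  rw [this, zero_sub]

lemma sInf_not_mem_of_isOpen {C : Set ℝ} (hC : IsOpen C) (hbdd : BddBelow C) : sInf C ∉ C := by
  intro hmem
  obtain ⟨l, u, hlu, hsub⟩ := mem_nhds_iff_exists_Ioo_subset.mp (hC.mem_nhds hmem)
  have hl : l < sInf C := hlu.1
  have hmid : (l + sInf C)/2 ∈ Ioo l u := ⟨by linarith, by linarith [hlu.2]⟩
  have := csInf_le hbdd (hsub hmid)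
  linarith

lemma sSup_not_mem_of_isOpen {C : Set ℝ} (hC : IsOpen C) (hbdd : BddAbove C) : sSup C ∉ C := by
  intro hmem
  obtain ⟨l, u, hlu, hsub⟩ := mem_nhds_iff_exists_Ioo_subset.mp (hC.mem_nhds hmem)
  have hu : sSup C < u := hlu.2
  have hmid : (sSup C + u)/2 ∈ Ioo l u := ⟨by linarith [hlu.1], by linarith⟩
  have := le_csSup hbdd (hsub hmid)
  linarith

/-- Under Assumption F, if `ε` has density `f` and `h` is absolutely
continuous with a.e. derivative `h'` such that `E|h'(ε)| < ∞`, `E|ℓ(ε)h(ε)| < ∞`, and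
`h(z) f(z) → 0` as `z → ±∞`, then `E[h'(ε)] = E[ℓ(ε)h(ε)]`. -/
theorem integration_by_parts_score
    {Ω : Type*} [MeasurableSpace Ω] (μ : Measure Ω) [IsProbabilityMeasure μ]
    (ε : Ω → ℝ) (hε : Measurable ε)
    (f f' : ℝ → ℝ) (hf'm : Measurable f')
    (hfpos : ∀ z, 0 ≤ f z) (hfint : ∫ z, f z = 1)
    (hfAC : ∀ a b : ℝ, f b - f a = ∫ z in a..b, f' z)
    (ℓ : ℝ → ℝ) (hℓ : ℓ = fun z => -f' z / f z)
    (hJ : Integrable fun z => ℓ z ^ 2 * f z)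
    (hdens : μ.map ε = (volume : Measure ℝ).withDensity fun z => ENNReal.ofReal (f z))
    (h h' : ℝ → ℝ) (hh'm : Measurable h')
    (hhAC : ∀ a b : ℝ, h b - h a = ∫ z in a..b, h' z)
    (hint1 : Integrable (fun ω => h' (ε ω)) μ)
    (hint2 : Integrable (fun ω => ℓ (ε ω) * h (ε ω)) μ)
    (hlim1 : Tendsto (fun z => h z * f z) atTop (nhds 0))
    (hlim2 : Tendsto (fun z => h z * f z) atBot (nhds 0)) :
    ∫ ω, h' (ε ω) ∂μ = ∫ ω, ℓ (ε ω) * h (ε ω) ∂μ := by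
  -- continuity and measurability
  have hfc : Continuous f := continuous_of_FTC f f' hfAC
  have hhc : Continuous h := continuous_of_FTC h h' hhAC
  have hfm : Measurable f := hfc.measurable
  have hhm : Measurable h := hhc.measurable
  have hℓm : Measurable ℓ := by rw [hℓ]; exact hf'm.neg.div hfm
  -- f is integrable
  have hfint' : Integrable f := by
    by_contra hc
    rw [integral_undef hc] at hfint
    exact one_ne_zero hfint.symm
  -- transfer to the real line
  obtain ⟨T1, T1i⟩ := transfer_integral μ ε hε f hfm hfpos hdens h' hh'm
  obtain ⟨T2, T2i⟩ := transfer_integral μ ε hε f hfm hfpos hdens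
    (fun z => ℓ z * h z) (hℓm.mul hhm)
  have hint1' : Integrable (fun z => h' z * f z) := T1i.mp hint1
  have hint2' : Integrable (fun z => (ℓ z * h z) * f z) := T2i.mp hint2
  rw [T1, T2]
  -- ℓ * f is integrable
  have hℓf : Integrable (fun z => ℓ z * f z) := by
    refine (hJ.add hfint').mono' (hℓm.mul hfm).aestronglyMeasurable
      (ae_of_all _ fun z => ?_)
    have h1 : |ℓ z| ≤ ℓ z ^ 2 + 1 := by nlinarith [sq_abs (ℓ z), abs_nonneg (ℓ z)]
    have h2 : ‖ℓ z * f z‖ = |ℓ z| * f z := by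
      rw [norm_mul, Real.norm_eq_abs, Real.norm_eq_abs, abs_of_nonneg (hfpos z)]
    have h4 : |ℓ z| * f z ≤ (ℓ z ^ 2 + 1) * f z :=
      mul_le_mul_of_nonneg_right h1 (hfpos z)
    rw [h2]
    calc |ℓ z| * f z ≤ (ℓ z ^ 2 + 1) * f z := h4
      _ = ((fun z => ℓ z ^ 2 * f z) + f) z := by simp [Pi.add_apply]; ring
  -- the set where f is positive
  set U : Set ℝ := {z | f z ≠ 0} with hU
  have hUopen : IsOpen U := isOpen_ne.preimage hfc
  -- D : the integrand difference
  set D : ℝ → ℝ := fun z => h' z * f z - ℓ z * h z * f z with hD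
  have hDint : Integrable D := by
    apply hint1'.sub
    exact hint2'.congr (ae_of_all _ fun z => by ring)
  -- ℓ f = -f' on U
  have hℓfU : ∀ z ∈ U, ℓ z * f z = -f' z := by
    intro z hz
    rw [hℓ]
    exact div_mul_cancel₀ _ hz
  have hDeq : ∀ z ∈ U, D z = h' z * f z + h z * f' z := by
    intro z hz
    have h2 : ℓ z * h z * f z = -f' z * h z := by
      calc ℓ z * h z * f z = (ℓ z * f z) * h z := by ring
        _ = -f' z * h z := by rw [hℓfU z hz]
    simp only [hD]
    rw [h2]
    ring
  -- suffices: integral of D is zero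
  suffices hsuf : ∫ z, D z = 0 by
    have h0 : (∫ z, h' z * f z) - ∫ z, ℓ z * h z * f z = 0 := by
      rw [← integral_sub hint1' hint2']
      exact hsuf
    linarith
  -- restrict to U
  have hDoff : ∀ z, z ∉ U → D z = 0 := by
    intro z hz
    have hz0 : f z = 0 := not_not.mp hz
    simp [hD, hz0]
  rw [← setIntegral_eq_integral_of_forall_compl_eq_zero hDoff]
  -- product rule for compact subintervals of U
  have hPR : ∀ a b : ℝ, a ≤ b → Icc a b ⊆ U →
      ∫ z in Ioc a b, D z = h b * f b - h a * f a := by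
    intro a b hab hsub
    have hne : (Icc a b).Nonempty := nonempty_Icc.2 hab
    obtain ⟨z₀, hz₀, hmin⟩ := isCompact_Icc.exists_isMinOn hne hfc.continuousOn
    have hminle : ∀ x ∈ Icc a b, f z₀ ≤ f x := fun x hx => hmin hx
    have hδ : 0 < f z₀ := (hfpos z₀).lt_of_ne (Ne.symm (hsub hz₀))
    have haeI : ∀ᵐ z ∂(volume.restrict (Ioc a b)), z ∈ Ioc a b :=
      ae_restrict_mem measurableSet_Ioc
    have hhi : IntegrableOn h' (Ioc a b) := by
      refine Integrable.mono' ((hint1'.norm.const_mul (f z₀)⁻¹).integrableOn)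
        hh'm.aestronglyMeasurable.restrict ?_
      filter_upwards [haeI] with z hz
      have h1 : f z₀ ≤ f z := hminle z (Ioc_subset_Icc_self hz)
      have h2 : ‖h' z * f z‖ = ‖h' z‖ * f z := by
        rw [norm_mul, Real.norm_eq_abs (f z), abs_of_nonneg (hfpos z)]
      rw [h2]
      rw [← mul_le_mul_iff_right₀ hδ]
      have : f z₀ * ((f z₀)⁻¹ * (‖h' z‖ * f z)) = ‖h' z‖ * f z := by
        field_simp
      rw [this]
      nlinarith [h1, norm_nonneg (h' z)]
    have hfi : IntegrableOn f' (Ioc a b) := by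
      have : IntegrableOn (fun z => -(ℓ z * f z)) (Ioc a b) := hℓf.neg.integrableOn
      refine this.congr_fun (fun z hz => ?_) measurableSet_Ioc
      show -(ℓ z * f z) = f' z
      rw [hℓfU z (hsub (Ioc_subset_Icc_self hz)), neg_neg]
    have hDcong : ∫ z in Ioc a b, D z = ∫ z in Ioc a b, (h' z * f z + h z * f' z) :=
      setIntegral_congr_fun measurableSet_Ioc fun z hz =>
        hDeq z (hsub (Ioc_subset_Icc_self hz))
    rw [hDcong]
    exact prod_rule_integral f f' h h' hf'm hh'm hfc hhc hfAC hhAC hab hfi hhi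
  -- S = h * f and its properties
  set S : ℝ → ℝ := fun z => h z * f z with hS
  have hSc : Continuous S := hhc.mul hfc
  have hS0 : ∀ z, z ∉ U → S z = 0 := by
    intro z hz
    have : f z = 0 := not_not.mp hz
    simp [hS, this]
  -- each connected component integrates to zero
  have hcomp : ∀ m, m ∈ U → ∫ z in connectedComponentIn U m, D z = 0 := by
    intro m hm
    set C := connectedComponentIn U m with hC
    have hmC : m ∈ C := mem_connectedComponentIn hm
    have hCU : C ⊆ U := connectedComponentIn_subset U m
    have hCopen : IsOpen C := hUopen.connectedComponentIn
    have hCne : C.Nonempty := ⟨m, hmC⟩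
    have hCpre : IsPreconnected C := isPreconnected_connectedComponentIn
    have hCord : OrdConnected C := hCpre.ordConnected
    -- left part
    have hleft : ∫ z in C ∩ Iic m, D z = S m := by
      by_cases hbdd : BddBelow C
      · obtain ⟨α, hα⟩ : ∃ a, a = sInf C := ⟨_, rfl⟩
        have hαnC : α ∉ C := hα ▸ sInf_not_mem_of_isOpen hCopen hbdd
        have hαle : ∀ z ∈ C, α ≤ z := fun z hz => hα ▸ csInf_le hbdd hz
        have hαm : α < m := (hαle m hmC).lt_of_ne
          (fun hcontr => hαnC (by rw [hcontr]; exact hmC))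
        have hzC : ∀ z, α < z → z ≤ m → z ∈ C := by
          intro z h1 h2
          obtain ⟨c, hcC, hcz⟩ := exists_lt_of_csInf_lt hCne (hα ▸ h1 : sInf C < z)
          exact hCord.out hcC hmC ⟨hcz.le, h2⟩
        have hLC : C ∩ Iic m = Ioc α m := by
          ext z
          constructor
          · rintro ⟨hzC', hzm⟩
            have hαz : α ≤ z := hαle z hzC'
            refine ⟨hαz.lt_of_ne (fun hcontr => hαnC (by rw [hcontr]; exact hzC')), hzm⟩
          · rintro ⟨h1, h2⟩
            exact ⟨hzC z h1 h2, h2⟩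
        have hαnU : α ∉ U := by
          intro hαU
          obtain ⟨l, u, hlu, hsubU⟩ :=
            mem_nhds_iff_exists_Ioo_subset.mp (hUopen.mem_nhds hαU)
          have hsUB : Ioo l m ⊆ U := by
            intro z hz
            rcases le_or_gt z α with h1 | h1
            · exact hsubU ⟨hz.1, lt_of_le_of_lt h1 hlu.2⟩
            · exact hCU (hzC z h1 hz.2.le)
          have hwmem : (α + m)/2 ∈ Ioo l m := ⟨by linarith [hlu.1], by linarith⟩
          have hwC : (α + m)/2 ∈ C := hzC _ (by linarith) (by linarith)
          have hsC : Ioo l m ⊆ C := by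
            have h1 := isPreconnected_Ioo.subset_connectedComponentIn hwmem hsUB
            have h2 : connectedComponentIn U ((α + m)/2) = C :=
              (connectedComponentIn_eq (hwC : (α + m)/2 ∈ connectedComponentIn U m)).symm
            exact h2 ▸ h1
          exact hαnC (hsC ⟨hlu.1, hαm⟩)
        have hfα : f α = 0 := not_not.mp hαnU
        rw [hLC]
        refine piece_left D hDint S hαm ?_ ?_
        · intro x h1 h2
          have hxC : x ∈ C := hzC x h1 h2
          refine hPR x m h2 ?_
          intro z hz
          exact hCU (hCord.out hxC hmC hz)
        · have : Tendsto S (nhds α) (nhds (S α)) := hSc.tendsto α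
          have hSα : S α = 0 := by simp [hS, hfα]
          rw [hSα] at this
          exact this.mono_left nhdsWithin_le_nhds
      · have hLC : C ∩ Iic m = Iic m := by
          apply inter_eq_right.mpr
          intro z hz
          obtain ⟨c, hcC, hcz⟩ := not_bddBelow_iff.mp hbdd z
          exact hCord.out hcC hmC ⟨hcz.le, hz⟩
        rw [hLC]
        refine piece_left_inf D hDint S m ?_ hlim2
        intro x hx
        have hxC : x ∈ C := by
          obtain ⟨c, hcC, hcz⟩ := not_bddBelow_iff.mp hbdd x
          exact hCord.out hcC hmC ⟨hcz.le, hx⟩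
        refine hPR x m hx ?_
        intro z hz
        exact hCU (hCord.out hxC hmC hz)
    -- right part
    have hright : ∫ z in C ∩ Ioi m, D z = - S m := by
      by_cases hbdd : BddAbove C
      · obtain ⟨β, hβ⟩ : ∃ b, b = sSup C := ⟨_, rfl⟩
        have hβnC : β ∉ C := hβ ▸ sSup_not_mem_of_isOpen hCopen hbdd
        have hβge : ∀ z ∈ C, z ≤ β := fun z hz => hβ ▸ le_csSup hbdd hz
        have hmβ : m < β := (hβge m hmC).lt_of_ne
          (fun hcontr => hβnC (by rw [← hcontr]; exact hmC))
        have hzC : ∀ z, m ≤ z → z < β → z ∈ C := by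
          intro z h1 h2
          obtain ⟨c, hcC, hcz⟩ := exists_lt_of_lt_csSup hCne (hβ ▸ h2 : z < sSup C)
          exact hCord.out hmC hcC ⟨h1, hcz.le⟩
        have hRC : C ∩ Ioi m = Ioo m β := by
          ext z
          constructor
          · rintro ⟨hzC', hzm⟩
            have hzβ : z ≤ β := hβge z hzC'
            exact ⟨hzm, hzβ.lt_of_ne (fun hcontr => hβnC (by rw [← hcontr]; exact hzC'))⟩
          · rintro ⟨h1, h2⟩
            exact ⟨hzC z h1.le h2, h1⟩
        have hβnU : β ∉ U := by
          intro hβU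
          obtain ⟨l, u, hlu, hsubU⟩ :=
            mem_nhds_iff_exists_Ioo_subset.mp (hUopen.mem_nhds hβU)
          have hsUB : Ioo m u ⊆ U := by
            intro z hz
            rcases lt_or_ge z β with h1 | h1
            · exact hCU (hzC z hz.1.le h1)
            · exact hsubU ⟨lt_of_lt_of_le hlu.1 h1, hz.2⟩
          have hwmem : (m + β)/2 ∈ Ioo m u := ⟨by linarith, by linarith [hlu.2]⟩
          have hwC : (m + β)/2 ∈ C := hzC _ (by linarith) (by linarith)
          have hsC : Ioo m u ⊆ C := by
            have h1 := isPreconnected_Ioo.subset_connectedComponentIn hwmem hsUB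
            have h2 : connectedComponentIn U ((m + β)/2) = C :=
              (connectedComponentIn_eq (hwC : (m + β)/2 ∈ connectedComponentIn U m)).symm
            exact h2 ▸ h1
          exact hβnC (hsC ⟨hmβ, hlu.2⟩)
        have hfβ : f β = 0 := not_not.mp hβnU
        rw [hRC]
        refine piece_right D hDint S hmβ ?_ ?_
        · intro y h1 h2
          have hyC : y ∈ C := hzC y h1 h2
          refine hPR m y h1 ?_
          intro z hz
          exact hCU (hCord.out hmC hyC hz)
        · have : Tendsto S (nhds β) (nhds (S β)) := hSc.tendsto β
          have hSβ : S β = 0 := by simp [hS, hfβ]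
          rw [hSβ] at this
          exact this.mono_left nhdsWithin_le_nhds
      · have hRC : C ∩ Ioi m = Ioi m := by
          apply inter_eq_right.mpr
          intro z hz
          obtain ⟨c, hcC, hcz⟩ := not_bddAbove_iff.mp hbdd z
          exact hCord.out hmC hcC ⟨le_of_lt hz, hcz.le⟩
        rw [hRC]
        refine piece_right_inf D hDint S m ?_ hlim1
        intro y hy
        have hyC : y ∈ C := by
          obtain ⟨c, hcC, hcz⟩ := not_bddAbove_iff.mp hbdd y
          exact hCord.out hmC hcC ⟨hy, hcz.le⟩
        refine hPR m y hy ?_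
        intro z hz
        exact hCU (hCord.out hmC hyC hz)
    -- combine
    have hsplit : C = (C ∩ Iic m) ∪ (C ∩ Ioi m) := by
      rw [← inter_union_distrib_left, Iic_union_Ioi, inter_univ]
    have hdisj : Disjoint (C ∩ Iic m) (C ∩ Ioi m) :=
      (Iic_disjoint_Ioi le_rfl).mono inter_subset_right inter_subset_right
    rw [hsplit, setIntegral_union hdisj (hCopen.measurableSet.inter measurableSet_Ioi)
      hDint.integrableOn hDint.integrableOn, hleft, hright]
    ring
  -- sum over components
  set 𝒞 : Set (Set ℝ) := (fun m => connectedComponentIn U m) '' U with h𝒞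
  have hUeq : U = ⋃₀ 𝒞 := by
    apply Subset.antisymm
    · intro m hm
      exact ⟨connectedComponentIn U m, ⟨m, hm, rfl⟩, mem_connectedComponentIn hm⟩
    · intro z hz
      obtain ⟨Cs, ⟨m, hm, rfl⟩, hzC⟩ := hz
      exact connectedComponentIn_subset U m hzC
  have hdisj : 𝒞.PairwiseDisjoint id := by
    rintro C₁ hC₁ C₂ hC₂ hne
    obtain ⟨m₁, hm₁, rfl⟩ := hC₁
    obtain ⟨m₂, hm₂, rfl⟩ := hC₂
    simp only [Function.onFun, id_eq]
    by_contra hcon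
    obtain ⟨z, hz1, hz2⟩ := Set.not_disjoint_iff.mp hcon
    exact hne ((connectedComponentIn_eq hz1).trans (connectedComponentIn_eq hz2).symm)
  have hcount : 𝒞.Countable := by
    refine Set.PairwiseDisjoint.countable_of_isOpen hdisj ?_ ?_
    · rintro C ⟨m, hm, rfl⟩
      exact hUopen.connectedComponentIn
    · rintro C ⟨m, hm, rfl⟩
      exact ⟨m, mem_connectedComponentIn hm⟩
  haveI : Countable ↥𝒞 := hcount.to_subtype
  have hUiu : U = ⋃ (C : ↥𝒞), (C : Set ℝ) := by
    rw [hUeq, sUnion_eq_iUnion]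
  have hmeasC : ∀ C : ↥𝒞, MeasurableSet (C : Set ℝ) := by
    rintro ⟨C, hCmem⟩
    obtain ⟨m, hm, rfl⟩ := hCmem
    exact hUopen.connectedComponentIn.measurableSet
  have hpair : Pairwise (Function.onFun Disjoint fun C : ↥𝒞 => (C : Set ℝ)) := by
    intro C₁ C₂ hne
    exact hdisj C₁.2 C₂.2 (fun heq => hne (Subtype.ext heq))
  have hiU : ∫ z in ⋃ (C : ↥𝒞), (C : Set ℝ), D z = ∑' (C : ↥𝒞), ∫ z in (C : Set ℝ), D z :=
    integral_iUnion hmeasC hpair hDint.integrableOn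
  rw [hUiu, hiU]
  have hzero : ∀ C : ↥𝒞, ∫ z in (C : Set ℝ), D z = 0 := by
    rintro ⟨C, hCmem⟩
    obtain ⟨m, hm, rfl⟩ := hCmem
    exact hcomp m hm
  simp only [hzero, tsum_zero]
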